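/- Let G be a (k+r)-regular graph with r ≥ 0. A set S ⊆ V(G) is a k-conversion set of G if and only if the induced subgraph G[V − S] is r-degenerate. -/

import Mathlib

open scoped Classical

noncomputable def convStep {V : Type*} [Fintype V] (G : SimpleGraph V) (k : ℕ)
    (S : Finset V) : Finset V :=
  S ∪ Finset.univ.filter fun v => k ≤ (S.filter fun u => G.Adj v u).card

def IsConversionSet {V : Type*} [Fintype V] (G : SimpleGraph V) (k : ℕ)
    (S : Finset V) : Prop :=
  ∃ t : ℕ, (convStep G k)^[t] S = Finset.univ

noncomputable def convNum {V : Type*} [Fintype V] (G : SimpleGraph V) (k : ℕ) : ℕ :=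
  sInf {n : ℕ | ∃ S : Finset V, IsConversionSet G k S ∧ S.card = n}

def IndepFinset {V : Type*} (G : SimpleGraph V) (S : Finset V) : Prop :=
  ∀ v ∈ S, ∀ w ∈ S, ¬ G.Adj v w

def Degenerate {V : Type*} (G : SimpleGraph V) (r : ℕ) : Prop :=
  ∀ s : Finset V, s.Nonempty → ∃ v ∈ s, (s.filter fun w => G.Adj v w).card ≤ r

private lemma convStep_subset' {V : Type*} [Fintype V] (G : SimpleGraph V) (k : ℕ)
    (S : Finset V) : S ⊆ convStep G k S := Finset.subset_union_left

private lemma subset_iterate' {V : Type*} [Fintype V] (G : SimpleGraph V) (k : ℕ)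
    (S : Finset V) (t : ℕ) : S ⊆ (convStep G k)^[t] S := by
  induction t with
  | zero => simp
  | succ n ih =>
      rw [Function.iterate_succ_apply']
      exact ih.trans (convStep_subset' G k _)

private lemma count_lemma' {V : Type*} [Fintype V] [DecidableEq V] (k r : ℕ)
    (G : SimpleGraph V) (hreg : G.IsRegularOfDegree (k + r)) (v : V) (A : Finset V) :
    (A.filter fun u => G.Adj v u).card
      + ((G.neighborFinset v).filter fun u => u ∉ A).card = k + r := by
  have h1 : (A.filter fun u => G.Adj v u) = (G.neighborFinset v).filter (fun u => u ∈ A) := by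
    ext u
    simp only [Finset.mem_filter, SimpleGraph.mem_neighborFinset]
    tauto
  rw [h1]
  rw [Finset.card_filter_add_card_filter_not]
  exact hreg v

private lemma mem_convStep' {V : Type*} [Fintype V] (G : SimpleGraph V) (k : ℕ)
    (S : Finset V) (x : V) :
    x ∈ convStep G k S ↔ x ∈ S ∨ k ≤ (S.filter fun u => G.Adj x u).card := by
  unfold convStep
  simp

theorem stmt9 {V : Type*} [Fintype V] [DecidableEq V] (k r : ℕ) (G : SimpleGraph V)
    (hreg : G.IsRegularOfDegree (k + r)) (S : Finset V) :
    IsConversionSet G k S ↔ Degenerate (G.induce ((Sᶜ : Finset V) : Set V)) r := by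
  constructor
  · rintro ⟨T, hT⟩ s hs
    have hex : ∀ x : V, ∃ t, x ∈ (convStep G k)^[t] S := fun x => ⟨T, by rw [hT]; exact Finset.mem_univ x⟩
    obtain ⟨v, hv, hmin⟩ := s.exists_min_image (fun w => Nat.find (hex w.1)) hs
    set m := Nat.find (hex v.1) with hm
    have hvS : (v : V) ∉ S := by
      have := v.2
      simpa using this
    have hm0 : m ≠ 0 := by
      intro h
      have : (v : V) ∈ (convStep G k)^[m] S := Nat.find_spec (hex v.1)
      rw [h] at this
      simp at this
      exact hvS this
    obtain ⟨p, hp⟩ : ∃ p, m = p + 1 := ⟨m - 1, by omega⟩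
    have hmem : (v : V) ∈ (convStep G k)^[p+1] S := by rw [← hp]; exact Nat.find_spec (hex v.1)
    have hnot : (v : V) ∉ (convStep G k)^[p] S := Nat.find_min (hex v.1) (by omega)
    rw [Function.iterate_succ_apply'] at hmem
    have hk : k ≤ (((convStep G k)^[p] S).filter fun u => G.Adj v.1 u).card := by
      rw [mem_convStep'] at hmem
      rcases hmem with h | h
      · exact absurd h hnot
      · exact h
    refine ⟨v, hv, ?_⟩
    have himg : ((s.filter fun w => (G.induce ((Sᶜ : Finset V) : Set V)).Adj v w).image
        Subtype.val) ⊆ (G.neighborFinset v.1).filter (fun u => u ∉ (convStep G k)^[p] S) := by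
      intro x hx
      obtain ⟨w, hw, rfl⟩ := Finset.mem_image.mp hx
      obtain ⟨hws, hadj⟩ := Finset.mem_filter.mp hw
      have hadj' : G.Adj v.1 w.1 := hadj
      refine Finset.mem_filter.mpr ⟨SimpleGraph.mem_neighborFinset _ _ _ |>.mpr hadj', ?_⟩
      intro hwin
      have : Nat.find (hex w.1) ≤ p := Nat.find_le hwin
      have := hmin w hws
      omega
    have hcard : (s.filter fun w => (G.induce ((Sᶜ : Finset V) : Set V)).Adj v w).card
        ≤ ((G.neighborFinset v.1).filter (fun u => u ∉ (convStep G k)^[p] S)).card := by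
      rw [← Finset.card_image_of_injective _ Subtype.val_injective]
      exact Finset.card_le_card himg
    have := count_lemma' k r G hreg v.1 ((convStep G k)^[p] S)
    have hfin : (s.filter fun w => (G.induce ((Sᶜ : Finset V) : Set V)).Adj v w).card ≤ r := by omega
    convert hfin
  · intro hdeg
    have step : ∀ t : ℕ, (convStep G k)^[t] S ≠ Finset.univ → (convStep G k)^[t] S ⊂ (convStep G k)^[t+1] S := by
      intro t hne
      have hsub : (convStep G k)^[t] S ⊆ (convStep G k)^[t+1] S := by
        rw [Function.iterate_succ_apply']
        exact convStep_subset' G k _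
      refine Finset.ssubset_iff_of_subset hsub |>.mpr ?_
      -- find a new vertex
      set s : Finset ((Sᶜ : Finset V) : Set V) :=
        Finset.univ.filter (fun w => w.1 ∉ (convStep G k)^[t] S) with hsdef
      have hsne : s.Nonempty := by
        obtain ⟨x, hx⟩ : ∃ x, x ∉ (convStep G k)^[t] S := by
          by_contra h
          push_neg at h
          exact hne (Finset.eq_univ_iff_forall.mpr h)
        have hxS : x ∉ S := fun hxS => hx (subset_iterate' G k S t hxS)
        refine ⟨⟨x, ?_⟩, ?_⟩
        · simpa using hxS
        · simp [hsdef, hx]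
      obtain ⟨v, hvs, hvr⟩ := hdeg s hsne
      have hvnot : v.1 ∉ (convStep G k)^[t] S := by
        have := Finset.mem_filter.mp hvs
        exact this.2
      refine ⟨v.1, ?_, hvnot⟩
      rw [Function.iterate_succ_apply', mem_convStep']
      refine Or.inr ?_
      -- count: neighbours outside (convStep G k)^[t] S inject into s.filter
      have himg : ((G.neighborFinset v.1).filter (fun u => u ∉ (convStep G k)^[t] S))
          ⊆ (s.filter fun w => (G.induce ((Sᶜ : Finset V) : Set V)).Adj v w).image
            Subtype.val := by
        intro x hx
        obtain ⟨hxn, hxnot⟩ := Finset.mem_filter.mp hx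
        have hadj : G.Adj v.1 x := (SimpleGraph.mem_neighborFinset _ _ _).mp hxn
        have hxS : x ∉ S := fun h => hxnot (subset_iterate' G k S t h)
        have hxmem : x ∈ ((Sᶜ : Finset V) : Set V) := by simpa using hxS
        refine Finset.mem_image.mpr ⟨⟨x, hxmem⟩, ?_, rfl⟩
        refine Finset.mem_filter.mpr ⟨?_, hadj⟩
        simp [hsdef, hxnot]
      have hcard : ((G.neighborFinset v.1).filter (fun u => u ∉ (convStep G k)^[t] S)).card ≤ r := by
        calc ((G.neighborFinset v.1).filter (fun u => u ∉ (convStep G k)^[t] S)).card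
            ≤ ((s.filter fun w => (G.induce ((Sᶜ : Finset V) : Set V)).Adj v w).image
              Subtype.val).card := Finset.card_le_card himg
          _ = (s.filter fun w => (G.induce ((Sᶜ : Finset V) : Set V)).Adj v w).card :=
              Finset.card_image_of_injective _ Subtype.val_injective
          _ ≤ r := hvr
      have := count_lemma' k r G hreg v.1 ((convStep G k)^[t] S)
      omega
    have grow : ∀ t : ℕ, (convStep G k)^[t] S = Finset.univ ∨ S.card + t ≤ ((convStep G k)^[t] S).card := by
      intro t
      induction t with
      | zero => right; simp
      | succ n ih =>
          by_cases hn : (convStep G k)^[n] S = Finset.univ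
          · left
            rw [Function.iterate_succ_apply', hn]
            apply Finset.eq_univ_of_forall
            intro x
            exact convStep_subset' G k Finset.univ (Finset.mem_univ x)
          · rcases ih with h | h
            · exact absurd h hn
            · right
              have := Finset.card_lt_card (step n hn)
              omega
    rcases grow (Fintype.card V) with h | h
    · exact ⟨Fintype.card V, h⟩
    · have hle : ((convStep G k)^[Fintype.card V] S).card ≤ Fintype.card V := by
        simpa using Finset.card_le_univ ((convStep G k)^[Fintype.card V] S)
      exact ⟨Fintype.card V, Finset.eq_univ_of_card _ (by omega)⟩
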